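/- Let Π := σ( π_t(σ(W)) : t ∈ 𝕋 ) be the σ-algebra generated by the propensity scores π_t(σ(W)) = E[1{T=t} | σ(W)], so that Π ⊆ σ(W). Assume positivity, let 𝒵 be a sub-σ-algebra with Π ⊆ 𝒵 ⊆ σ(W), and assume that for every t ∈ 𝕋 the variables b_t(Π), b_t(𝒵), b_t(σ(W)) are integrable and ψ_t(Π), ψ_t(𝒵) are square-integrable. Then: (a) χ_t(𝒵) = χ_t(σ(W)) for every t ∈ 𝕋 (𝒵 is a valid adjustment); (b) with R_t := (1{T=t}/π_t(𝒵) − 1)·(b_t(𝒵) − b_t(Π)), it holds that V_Δ(Π) − V_Δ(𝒵) = Var( Σ_{t∈𝕋} c_t·R_t ) ≥ 0. -/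

import Mathlib

open MeasureTheory ProbabilityTheory

noncomputable section

/-- The real-valued indicator of the event `{T = t}`. -/
def indT {Ω 𝕋 : Type*} (T : Ω → 𝕋) (t : 𝕋) : Ω → ℝ :=
  ({ω | T ω = t}).indicator fun _ => 1

/-- The propensity `π_t(𝒵) = E[1{T = t} | 𝒵]`. -/
def piZ {Ω 𝕋 : Type*} {mΩ : MeasurableSpace Ω} (P : Measure Ω) (T : Ω → 𝕋)
    (𝒵 : MeasurableSpace Ω) (t : 𝕋) : Ω → ℝ :=
  P[indT T t|𝒵]

/-- The outcome regression `b_t(𝒵) = E[Y·1{T = t} | 𝒵] / π_t(𝒵)`. -/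
def bZ {Ω 𝕋 : Type*} {mΩ : MeasurableSpace Ω} (P : Measure Ω) (T : Ω → 𝕋) (Y : Ω → ℝ)
    (𝒵 : MeasurableSpace Ω) (t : 𝕋) : Ω → ℝ :=
  fun ω => (P[fun ω' => Y ω' * indT T t ω'|𝒵]) ω / piZ P T 𝒵 t ω

/-- The adjusted mean `χ_t(𝒵) = E[b_t(𝒵)]`. -/
def chiZ {Ω 𝕋 : Type*} {mΩ : MeasurableSpace Ω} (P : Measure Ω) (T : Ω → 𝕋) (Y : Ω → ℝ)
    (𝒵 : MeasurableSpace Ω) (t : 𝕋) : ℝ :=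
  ∫ ω, bZ P T Y 𝒵 t ω ∂P

/-- The influence function `ψ_t(𝒵) = b_t(𝒵) + (1{T=t}/π_t(𝒵))·(Y − b_t(𝒵)) − χ_t(𝒵)`. -/
def psiZ {Ω 𝕋 : Type*} {mΩ : MeasurableSpace Ω} (P : Measure Ω) (T : Ω → 𝕋) (Y : Ω → ℝ)
    (𝒵 : MeasurableSpace Ω) (t : 𝕋) : Ω → ℝ :=
  fun ω => bZ P T Y 𝒵 t ω + indT T t ω / piZ P T 𝒵 t ω * (Y ω - bZ P T Y 𝒵 t ω)
    - chiZ P T Y 𝒵 t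

/-- The efficiency bound `V_Δ(𝒵) = Var(Σ_t c_t·ψ_t(𝒵))`. -/
def VDelta {Ω 𝕋 : Type*} {mΩ : MeasurableSpace Ω} [Fintype 𝕋] (P : Measure Ω) (T : Ω → 𝕋)
    (Y : Ω → ℝ) (c : 𝕋 → ℝ) (𝒵 : MeasurableSpace Ω) : ℝ :=
  variance (fun ω => ∑ t, c t * psiZ P T Y 𝒵 t ω) P

end

/-- The σ-algebra `Π` generated by the propensity scores `π_t(σ(W))`, `t ∈ 𝕋`. -/
noncomputable def propAlg {Ω 𝕎 𝕋 : Type*} {mΩ : MeasurableSpace Ω} [MeasurableSpace 𝕎]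
    (P : Measure Ω) (T : Ω → 𝕋) (W : Ω → 𝕎) : MeasurableSpace Ω :=
  ⨆ t : 𝕋, MeasurableSpace.comap
    (piZ P T (MeasurableSpace.comap W inferInstance) t) inferInstance

section Helpers

variable {α : Type*} {m m0 : MeasurableSpace α} {μ : Measure α}

lemma memLp_two_condexp [IsFiniteMeasure μ] (hm : m ≤ m0) {f : α → ℝ} (hf : MemLp f 2 μ) :
    MemLp (μ[f|m]) 2 μ := by
  have hint : Integrable f μ := hf.integrable one_le_two
  set fL : Lp ℝ 2 μ := hf.toLp f with hfL
  have hae : (condExpL2 ℝ ℝ hm fL : α → ℝ) =ᵐ[μ] μ[f|m] := by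
    refine ae_eq_condExp_of_forall_setIntegral_eq hm hint
      (fun s hs hμs => integrableOn_Lp_of_measure_ne_top _ fact_one_le_two_ennreal.elim hμs.ne)
      (fun s hs hμs => ?_) (lpMeas.aestronglyMeasurable _)
    rw [integral_condExpL2_eq hm fL hs hμs.ne]
    exact setIntegral_congr_ae (hm s hs) ((hf.coeFn_toLp).mono fun x hx _ => hx)
  exact (Lp.memLp _).ae_eq hae

lemma variance_congr_ae' {X Y : α → ℝ} (h : X =ᵐ[μ] Y) : variance X μ = variance Y μ := by
  have hm : ∫ ω, X ω ∂μ = ∫ ω, Y ω ∂μ := integral_congr_ae h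
  unfold ProbabilityTheory.variance ProbabilityTheory.evariance
  congr 1
  refine lintegral_congr_ae ?_
  filter_upwards [h] with ω hω
  rw [hω, hm]

lemma integrable_mul_of_memLp_two {f g : α → ℝ} (hf : MemLp f 2 μ) (hg : MemLp g 2 μ) :
    Integrable (fun ω => f ω * g ω) μ := by
  have h : MemLp (f • g) 1 μ :=
    hg.smul hf (hpqr := ⟨by rw [ENNReal.inv_two_add_inv_two, inv_one]⟩)
  rw [memLp_one_iff_integrable] at h
  exact h

lemma integral_mul_eq_zero_of_condexp [IsFiniteMeasure μ] (hm : m ≤ m0) {F G : α → ℝ}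
    (hF : StronglyMeasurable[m] F) (hG : Integrable G μ)
    (hFG : Integrable (fun ω => F ω * G ω) μ)
    (hcond : μ[G|m] =ᵐ[μ] 0) : ∫ ω, F ω * G ω ∂μ = 0 := by
  have h1 : μ[F * G|m] =ᵐ[μ] F * μ[G|m] := condExp_mul_of_stronglyMeasurable_left hF hFG hG
  have h2 : μ[F * G|m] =ᵐ[μ] 0 := by
    refine h1.trans ?_
    filter_upwards [hcond] with ω hω
    simp [hω]
  calc ∫ ω, F ω * G ω ∂μ = ∫ ω, (μ[F * G|m]) ω ∂μ := (integral_condExp hm).symm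
    _ = 0 := by rw [integral_congr_ae h2]; simp

end Helpers

/-- **Validity and inefficiency of propensity-score adjustment.** If `Π ⊆ 𝒵 ⊆ σ(W)`, where
`Π` is the σ-algebra generated by the propensity scores, then `𝒵` is valid,
`χ_t(𝒵) = χ_t(σ(W))`, and `V_Δ(Π) − V_Δ(𝒵) = Var(Σ_t c_t·R_t(Π,𝒵)) ≥ 0`. -/
theorem propensity_adjustment
    {Ω 𝕎 𝕋 : Type*} [mΩ : MeasurableSpace Ω] [StandardBorelSpace Ω]
    [MeasurableSpace 𝕎] [MeasurableSpace 𝕋] [MeasurableSingletonClass 𝕋]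
    [Fintype 𝕋] [Nonempty 𝕋]
    (P : Measure Ω) [IsProbabilityMeasure P]
    (T : Ω → 𝕋) (Y : Ω → ℝ) (W : Ω → 𝕎)
    (hT : Measurable T) (hY : Measurable Y) (hW : Measurable W)
    (hY2 : MemLp Y 2 P)
    (c : 𝕋 → ℝ)
    (𝒵 : MeasurableSpace Ω)
    (hPialg𝒵 : propAlg P T W ≤ 𝒵)
    (h𝒵W : 𝒵 ≤ MeasurableSpace.comap W inferInstance)
    (hpos : ∀ t, ∀ᵐ ω ∂P,
      0 < piZ P T (MeasurableSpace.comap W inferInstance) t ω ∧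
        piZ P T (MeasurableSpace.comap W inferInstance) t ω < 1)
    (hbPialg : ∀ t, Integrable (bZ P T Y (propAlg P T W) t) P)
    (hb𝒵 : ∀ t, Integrable (bZ P T Y 𝒵 t) P)
    (hbW : ∀ t, Integrable (bZ P T Y (MeasurableSpace.comap W inferInstance) t) P)
    (hψPialg : ∀ t, MemLp (psiZ P T Y (propAlg P T W) t) 2 P)
    (hψ𝒵 : ∀ t, MemLp (psiZ P T Y 𝒵 t) 2 P) :
    (∀ t, chiZ P T Y 𝒵 t = chiZ P T Y (MeasurableSpace.comap W inferInstance) t) ∧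
    (VDelta P T Y c (propAlg P T W) - VDelta P T Y c 𝒵 =
      variance (fun ω => ∑ t, c t *
        ((indT T t ω / piZ P T 𝒵 t ω - 1) *
          (bZ P T Y 𝒵 t ω - bZ P T Y (propAlg P T W) t ω))) P) ∧
    (0 ≤ VDelta P T Y c (propAlg P T W) - VDelta P T Y c 𝒵) := by
  classical
  -- notation
  set mW : MeasurableSpace Ω := MeasurableSpace.comap W inferInstance with hmWdef
  set mP : MeasurableSpace Ω := propAlg P T W with hmPdef
  have hmW : mW ≤ mΩ := hW.comap_le
  have h𝒵Ω : 𝒵 ≤ mΩ := h𝒵W.trans hmW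
  -- the propensity score
  set π : 𝕋 → Ω → ℝ := fun t => piZ P T mW t with hπdef
  have hπ_measP : ∀ t, Measurable[mP] (π t) := by
    intro t
    refine measurable_iff_comap_le.mpr ?_
    exact le_iSup (fun t => MeasurableSpace.comap (piZ P T mW t) inferInstance) t
  have hπ_measW : ∀ t, StronglyMeasurable[mW] (π t) := fun t => stronglyMeasurable_condExp
  have hmP_le : mP ≤ mW := by
    refine iSup_le fun t => measurable_iff_comap_le.mp ?_
    exact (hπ_measW t).measurable
  have hmPΩ : mP ≤ mΩ := hmP_le.trans hmW
  have hπ_int : ∀ t, Integrable (π t) P := fun t => integrable_condExp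
  have hπ_pos : ∀ t, ∀ᵐ ω ∂P, 0 < π t ω := fun t => (hpos t).mono fun ω h => h.1
  -- the indicator
  have hind_set : ∀ t : 𝕋, MeasurableSet[mΩ] {ω | T ω = t} := fun t =>
    hT (measurableSet_singleton t)
  have hind_meas : ∀ t, Measurable[mΩ] (indT T t) := fun t =>
    measurable_const.indicator (hind_set t)
  have hind_bd : ∀ t ω, ‖indT T t ω‖ ≤ 1 := by
    intro t ω
    simp only [indT, Set.indicator]
    split <;> simp
  have hind_int : ∀ t, Integrable (indT T t) P := by
    intro t
    refine Integrable.mono' (g := fun _ => (1 : ℝ)) ?_ (hind_meas t).aestronglyMeasurable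
      (Filter.Eventually.of_forall fun ω => hind_bd t ω)
    exact integrable_const _
  have hind_eq_one : ∀ t ω, T ω = t → indT T t ω = 1 := by
    intro t ω h; simp [indT, h]
  have hind_eq_zero : ∀ t ω, T ω ≠ t → indT T t ω = 0 := by
    intro t ω h; simp [indT, h]
  -- π_t(𝒳) = π_t for Π ≤ 𝒳 ≤ σ(W)
  have hπeq : ∀ (𝒳 : MeasurableSpace Ω), mP ≤ 𝒳 → ∀ (h𝒳W : 𝒳 ≤ mW) (t : 𝕋),
      piZ P T 𝒳 t =ᵐ[P] π t := by
    intro 𝒳 h1 h2 t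
    have h𝒳Ω : 𝒳 ≤ mΩ := h2.trans hmW
    have hsm : StronglyMeasurable[𝒳] (π t) :=
      ((hπ_measP t).mono h1 le_rfl).stronglyMeasurable
    calc piZ P T 𝒳 t = P[indT T t|𝒳] := rfl
      _ =ᵐ[P] P[P[indT T t|mW]|𝒳] := (condExp_condExp_of_le h2 hmW).symm
      _ = P[π t|𝒳] := rfl
      _ = π t := condExp_of_stronglyMeasurable h𝒳Ω hsm (hπ_int t)
  -- the numerator function
  set f : 𝕋 → Ω → ℝ := fun t ω => Y ω * indT T t ω with hfdef
  have hf_int : ∀ t, Integrable (f t) P := by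
    intro t
    refine Integrable.mono' ((hY2.integrable one_le_two).abs)
      ((hY.mul (hind_meas t)).aestronglyMeasurable) ?_
    refine Filter.Eventually.of_forall fun ω => ?_
    calc ‖Y ω * indT T t ω‖ = ‖Y ω‖ * ‖indT T t ω‖ := norm_mul _ _
      _ ≤ ‖Y ω‖ * 1 := by gcongr; exact hind_bd t ω
      _ = |Y ω| := by simp
  -- b measurability
  have hb_meas : ∀ (𝒳 : MeasurableSpace Ω) (t : 𝕋),
      StronglyMeasurable[𝒳] (bZ P T Y 𝒳 t) := by
    intro 𝒳 t
    exact (stronglyMeasurable_condExp.measurable.div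
      stronglyMeasurable_condExp.measurable).stronglyMeasurable
  -- b · π = E[f|𝒳]
  have hbrel : ∀ (𝒳 : MeasurableSpace Ω), mP ≤ 𝒳 → ∀ (h𝒳W : 𝒳 ≤ mW) (t : 𝕋),
      bZ P T Y 𝒳 t =ᵐ[P] fun ω => (π t ω)⁻¹ * (P[f t|𝒳]) ω := by
    intro 𝒳 h1 h2 t
    filter_upwards [hπeq 𝒳 h1 h2 t, hπ_pos t] with ω h h'
    simp only [bZ, h, div_eq_inv_mul]
    rfl
  have hbπ : ∀ (𝒳 : MeasurableSpace Ω), mP ≤ 𝒳 → ∀ (h𝒳W : 𝒳 ≤ mW) (t : 𝕋),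
      (fun ω => bZ P T Y 𝒳 t ω * π t ω) =ᵐ[P] P[f t|𝒳] := by
    intro 𝒳 h1 h2 t
    filter_upwards [hbrel 𝒳 h1 h2 t, hπ_pos t] with ω h h'
    rw [h]; field_simp
  -- Part (a): the χ's agree
  have chi_eq : ∀ (𝒳 : MeasurableSpace Ω), mP ≤ 𝒳 → ∀ (h𝒳W : 𝒳 ≤ mW) (t : 𝕋),
      Integrable (bZ P T Y 𝒳 t) P → chiZ P T Y 𝒳 t = chiZ P T Y mW t := by
    intro 𝒳 h1 h2 t hbint
    have h𝒳Ω : 𝒳 ≤ mΩ := h2.trans hmW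
    set g : Ω → ℝ := P[f t|mW] with hgdef
    have hg_int : Integrable g P := integrable_condExp
    have h1W : bZ P T Y mW t =ᵐ[P] fun ω => (π t ω)⁻¹ * g ω := hbrel mW hmP_le le_rfl t
    have hπinv_sm : StronglyMeasurable[𝒳] fun ω => (π t ω)⁻¹ :=
      (((hπ_measP t).mono h1 le_rfl).inv).stronglyMeasurable
    have hπg_int : Integrable (fun ω => (π t ω)⁻¹ * g ω) P :=
      (hbW t).congr h1W
    have hpull : P[(fun ω => (π t ω)⁻¹) * g|𝒳]
        =ᵐ[P] (fun ω => (π t ω)⁻¹) * P[g|𝒳] :=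
      condExp_mul_of_stronglyMeasurable_left hπinv_sm hπg_int hg_int
    have htow : P[g|𝒳] =ᵐ[P] P[f t|𝒳] := condExp_condExp_of_le h2 hmW
    have h3 : bZ P T Y 𝒳 t =ᵐ[P] fun ω => (π t ω)⁻¹ * (P[f t|𝒳]) ω :=
      hbrel 𝒳 h1 h2 t
    calc chiZ P T Y 𝒳 t = ∫ ω, bZ P T Y 𝒳 t ω ∂P := rfl
      _ = ∫ ω, (π t ω)⁻¹ * (P[f t|𝒳]) ω ∂P := integral_congr_ae h3
      _ = ∫ ω, (π t ω)⁻¹ * (P[g|𝒳]) ω ∂P := by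
          refine integral_congr_ae ?_
          filter_upwards [htow] with ω h; rw [h]
      _ = ∫ ω, (P[(fun ω => (π t ω)⁻¹) * g|𝒳]) ω ∂P := by
          refine (integral_congr_ae ?_).symm
          filter_upwards [hpull] with ω h; rw [h]; rfl
      _ = ∫ ω, (π t ω)⁻¹ * g ω ∂P := integral_condExp h𝒳Ω
      _ = ∫ ω, bZ P T Y mW t ω ∂P := (integral_congr_ae h1W).symm
      _ = chiZ P T Y mW t := rfl
  have hchi𝒵 : ∀ t, chiZ P T Y 𝒵 t = chiZ P T Y mW t := fun t =>
    chi_eq 𝒵 hPialg𝒵 h𝒵W t (hb𝒵 t)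
  have hchiP : ∀ t, chiZ P T Y mP t = chiZ P T Y mW t := fun t =>
    chi_eq mP le_rfl hmP_le t (hbPialg t)
  -- the residual functions for a generic 𝒳
  have hbind_int : ∀ (𝒳 : MeasurableSpace Ω), 𝒳 ≤ mW → ∀ (t : 𝕋),
      Integrable (bZ P T Y 𝒳 t) P →
      Integrable (fun ω => bZ P T Y 𝒳 t ω * indT T t ω) P := by
    intro 𝒳 h2 t hbint
    refine Integrable.mono' hbint.abs
      ((((hb_meas 𝒳 t).measurable.mono (h2.trans hmW) le_rfl).mul
        (hind_meas t)).aestronglyMeasurable) ?_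
    refine Filter.Eventually.of_forall fun ω => ?_
    calc ‖bZ P T Y 𝒳 t ω * indT T t ω‖ = ‖bZ P T Y 𝒳 t ω‖ * ‖indT T t ω‖ := norm_mul _ _
      _ ≤ ‖bZ P T Y 𝒳 t ω‖ * 1 := by gcongr; exact hind_bd t ω
      _ = |bZ P T Y 𝒳 t ω| := by simp
  have hG2_int : ∀ (𝒳 : MeasurableSpace Ω), 𝒳 ≤ mW → ∀ (t : 𝕋),
      Integrable (bZ P T Y 𝒳 t) P →
      Integrable (fun ω => indT T t ω * (Y ω - bZ P T Y 𝒳 t ω)) P := by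
    intro 𝒳 h2 t hbint
    have : (fun ω => indT T t ω * (Y ω - bZ P T Y 𝒳 t ω))
        = fun ω => f t ω - bZ P T Y 𝒳 t ω * indT T t ω := by
      funext ω; simp only [hfdef]; ring
    rw [this]
    exact (hf_int t).sub (hbind_int 𝒳 h2 t hbint)
  have hG2_cond : ∀ (𝒳 : MeasurableSpace Ω), mP ≤ 𝒳 → ∀ (h𝒳W : 𝒳 ≤ mW) (t : 𝕋),
      Integrable (bZ P T Y 𝒳 t) P →
      P[(fun ω => indT T t ω * (Y ω - bZ P T Y 𝒳 t ω))|𝒳] =ᵐ[P] 0 := by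
    intro 𝒳 h1 h2 t hbint
    have h𝒳Ω : 𝒳 ≤ mΩ := h2.trans hmW
    have heq : (fun ω => indT T t ω * (Y ω - bZ P T Y 𝒳 t ω))
        = fun ω => f t ω - bZ P T Y 𝒳 t ω * indT T t ω := by
      funext ω; simp only [hfdef]; ring
    have hpull : P[(bZ P T Y 𝒳 t) * (indT T t)|𝒳]
        =ᵐ[P] (bZ P T Y 𝒳 t) * P[indT T t|𝒳] :=
      condExp_mul_of_stronglyMeasurable_left (hb_meas 𝒳 t) (hbind_int 𝒳 h2 t hbint) (hind_int t)
    have hsub : P[(fun ω => f t ω - bZ P T Y 𝒳 t ω * indT T t ω)|𝒳]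
        =ᵐ[P] P[f t|𝒳] - P[(bZ P T Y 𝒳 t) * (indT T t)|𝒳] :=
      condExp_sub (hf_int t) (hbind_int 𝒳 h2 t hbint) 𝒳
    rw [heq]
    refine hsub.trans ?_
    filter_upwards [hpull, hbπ 𝒳 h1 h2 t, hπeq 𝒳 h1 h2 t] with ω hω hb hpi
    simp only [Pi.sub_apply, Pi.mul_apply, Pi.zero_apply]
    rw [hω]
    simp only [Pi.mul_apply]
    have : (P[indT T t|𝒳]) ω = π t ω := hpi
    rw [this]
    rw [← hb]
    ring
  -- the "martingale part" q and conditional expectation of ψ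
  have hq_int : ∀ (𝒳 : MeasurableSpace Ω) (t : 𝕋),
      Integrable (bZ P T Y 𝒳 t) P → MemLp (psiZ P T Y 𝒳 t) 2 P →
      Integrable (fun ω => indT T t ω / piZ P T 𝒳 t ω * (Y ω - bZ P T Y 𝒳 t ω)) P := by
    intro 𝒳 t hbint hψmem
    have : (fun ω => indT T t ω / piZ P T 𝒳 t ω * (Y ω - bZ P T Y 𝒳 t ω))
        = fun ω => psiZ P T Y 𝒳 t ω - bZ P T Y 𝒳 t ω + chiZ P T Y 𝒳 t := by
      funext ω; simp only [psiZ]; ring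
    rw [this]
    exact (((hψmem.integrable one_le_two).sub hbint).add (integrable_const _))
  have hq_cond : ∀ (𝒳 : MeasurableSpace Ω), mP ≤ 𝒳 → ∀ (h𝒳W : 𝒳 ≤ mW) (t : 𝕋),
      Integrable (bZ P T Y 𝒳 t) P → MemLp (psiZ P T Y 𝒳 t) 2 P →
      P[(fun ω => indT T t ω / piZ P T 𝒳 t ω * (Y ω - bZ P T Y 𝒳 t ω))|𝒳] =ᵐ[P] 0 := by
    intro 𝒳 h1 h2 t hbint hψmem
    have h𝒳Ω : 𝒳 ≤ mΩ := h2.trans hmW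
    have hπinv_sm : StronglyMeasurable[𝒳] fun ω => (π t ω)⁻¹ :=
      (((hπ_measP t).mono h1 le_rfl).inv).stronglyMeasurable
    have hqeq : (fun ω => indT T t ω / piZ P T 𝒳 t ω * (Y ω - bZ P T Y 𝒳 t ω)) =ᵐ[P]
        (fun ω => (π t ω)⁻¹) * (fun ω => indT T t ω * (Y ω - bZ P T Y 𝒳 t ω)) := by
      filter_upwards [hπeq 𝒳 h1 h2 t] with ω h
      simp only [Pi.mul_apply]
      rw [h, div_eq_inv_mul, mul_assoc]
    have hmul_int : Integrable ((fun ω => (π t ω)⁻¹) *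
        (fun ω => indT T t ω * (Y ω - bZ P T Y 𝒳 t ω))) P :=
      (hq_int 𝒳 t hbint hψmem).congr hqeq
    have hpull := condExp_mul_of_stronglyMeasurable_left (μ := P) hπinv_sm hmul_int
      (hG2_int 𝒳 h2 t hbint)
    refine (condExp_congr_ae hqeq).trans (hpull.trans ?_)
    filter_upwards [hG2_cond 𝒳 h1 h2 t hbint] with ω h
    simp only [Pi.mul_apply, Pi.zero_apply]
    rw [h]; simp
  have hψ_cond : ∀ (𝒳 : MeasurableSpace Ω), mP ≤ 𝒳 → ∀ (h𝒳W : 𝒳 ≤ mW) (t : 𝕋),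
      Integrable (bZ P T Y 𝒳 t) P → MemLp (psiZ P T Y 𝒳 t) 2 P →
      P[psiZ P T Y 𝒳 t|𝒳] =ᵐ[P] fun ω => bZ P T Y 𝒳 t ω - chiZ P T Y 𝒳 t := by
    intro 𝒳 h1 h2 t hbint hψmem
    have h𝒳Ω : 𝒳 ≤ mΩ := h2.trans hmW
    have hsplit : psiZ P T Y 𝒳 t = (fun ω => bZ P T Y 𝒳 t ω - chiZ P T Y 𝒳 t)
        + (fun ω => indT T t ω / piZ P T 𝒳 t ω * (Y ω - bZ P T Y 𝒳 t ω)) := by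
      funext ω; simp only [psiZ, Pi.add_apply]; ring
    have hbc_int : Integrable (fun ω => bZ P T Y 𝒳 t ω - chiZ P T Y 𝒳 t) P :=
      hbint.sub (integrable_const _)
    have hadd := condExp_add (μ := P) (m := 𝒳) hbc_int (hq_int 𝒳 t hbint hψmem)
    have hfix : P[(fun ω => bZ P T Y 𝒳 t ω - chiZ P T Y 𝒳 t)|𝒳]
        = fun ω => bZ P T Y 𝒳 t ω - chiZ P T Y 𝒳 t :=
      condExp_of_stronglyMeasurable h𝒳Ω
        ((hb_meas 𝒳 t).sub stronglyMeasurable_const) hbc_int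
    rw [hsplit]
    refine hadd.trans ?_
    filter_upwards [hq_cond 𝒳 h1 h2 t hbint hψmem] with ω hq
    simp only [Pi.add_apply, hfix, hq, Pi.zero_apply, add_zero]
  have ha_mem : ∀ (𝒳 : MeasurableSpace Ω), mP ≤ 𝒳 → ∀ (h𝒳W : 𝒳 ≤ mW) (t : 𝕋),
      Integrable (bZ P T Y 𝒳 t) P → MemLp (psiZ P T Y 𝒳 t) 2 P →
      MemLp (fun ω => bZ P T Y 𝒳 t ω - chiZ P T Y 𝒳 t) 2 P := by
    intro 𝒳 h1 h2 t hbint hψmem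
    exact MemLp.ae_eq (hψ_cond 𝒳 h1 h2 t hbint hψmem)
      (memLp_two_condexp (h2.trans hmW) hψmem)
  -- specialization to 𝒵 and Π, with the common value of χ
  have hA𝒵 : ∀ t, MemLp (fun ω => bZ P T Y 𝒵 t ω - chiZ P T Y mW t) 2 P := by
    intro t
    have := ha_mem 𝒵 hPialg𝒵 h𝒵W t (hb𝒵 t) (hψ𝒵 t)
    rwa [hchi𝒵 t] at this
  have hAP : ∀ t, MemLp (fun ω => bZ P T Y mP t ω - chiZ P T Y mW t) 2 P := by
    intro t
    have := ha_mem mP le_rfl hmP_le t (hbPialg t) (hψPialg t)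
    rwa [hchiP t] at this
  have hg_mem : ∀ t, MemLp (fun ω => bZ P T Y 𝒵 t ω - bZ P T Y mP t ω) 2 P := by
    intro t
    refine MemLp.ae_eq (Filter.Eventually.of_forall fun ω => ?_) ((hA𝒵 t).sub (hAP t))
    simp only [Pi.sub_apply]; ring
  have hq𝒵_mem : ∀ t, MemLp
      (fun ω => indT T t ω / piZ P T 𝒵 t ω * (Y ω - bZ P T Y 𝒵 t ω)) 2 P := by
    intro t
    refine MemLp.ae_eq (Filter.Eventually.of_forall fun ω => ?_) ((hψ𝒵 t).sub (hA𝒵 t))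
    simp only [Pi.sub_apply, psiZ]
    rw [hchi𝒵 t]; ring
  -- the difference functions R t
  set R : 𝕋 → Ω → ℝ := fun t ω => (indT T t ω / piZ P T 𝒵 t ω - 1) *
    (bZ P T Y 𝒵 t ω - bZ P T Y mP t ω) with hRdef
  have hRψ : ∀ t, (fun ω => psiZ P T Y mP t ω - psiZ P T Y 𝒵 t ω) =ᵐ[P] R t := by
    intro t
    filter_upwards [hπeq 𝒵 hPialg𝒵 h𝒵W t, hπeq mP le_rfl hmP_le t] with ω h1 h2
    simp only [hRdef, psiZ]
    rw [hchi𝒵 t, hchiP t, h1, h2]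
    ring
  have hR_mem : ∀ t, MemLp (R t) 2 P := by
    intro t
    exact MemLp.ae_eq (hRψ t) ((hψPialg t).sub (hψ𝒵 t))
  -- 𝒵-measurability of the building blocks
  have hb𝒵m : ∀ t, Measurable[𝒵] (bZ P T Y 𝒵 t) := fun t => (hb_meas 𝒵 t).measurable
  have hbPm : ∀ t, Measurable[𝒵] (bZ P T Y mP t) := fun t =>
    ((hb_meas mP t).measurable).mono hPialg𝒵 le_rfl
  have hπm : ∀ t, Measurable[𝒵] (π t) := fun t => (hπ_measP t).mono hPialg𝒵 le_rfl
  have hgm : ∀ t, Measurable[𝒵] (fun ω => bZ P T Y 𝒵 t ω - bZ P T Y mP t ω) := fun t =>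
    (hb𝒵m t).sub (hbPm t)
  -- conditional expectation of the centered indicator is 0
  have hcent_cond : ∀ s, P[(fun ω => indT T s ω - π s ω)|𝒵] =ᵐ[P] 0 := by
    intro s
    have h1 : P[(fun ω => indT T s ω - π s ω)|𝒵]
        =ᵐ[P] P[indT T s|𝒵] - P[π s|𝒵] := condExp_sub (hind_int s) (hπ_int s) 𝒵
    have h2 : P[π s|𝒵] = π s := condExp_of_stronglyMeasurable h𝒵Ω
      ((hπm s).stronglyMeasurable) (hπ_int s)
    refine h1.trans ?_
    filter_upwards [hπeq 𝒵 hPialg𝒵 h𝒵W s] with ω h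
    simp only [Pi.sub_apply, Pi.zero_apply, h2]
    have : (P[indT T s|𝒵]) ω = π s ω := h
    rw [this]; ring
  have hcent_int : ∀ s, Integrable (fun ω => indT T s ω - π s ω) P := fun s =>
    (hind_int s).sub (hπ_int s)
  -- E[R s] = 0
  have hER : ∀ s, ∫ ω, R s ω ∂P = 0 := by
    intro s
    set F : Ω → ℝ := fun ω => (bZ P T Y 𝒵 s ω - bZ P T Y mP s ω) * (π s ω)⁻¹ with hFdef
    have hFsm : StronglyMeasurable[𝒵] F := ((hgm s).mul (hπm s).inv).stronglyMeasurable
    have hFG : (fun ω => F ω * (indT T s ω - π s ω)) =ᵐ[P] R s := by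
      filter_upwards [hπeq 𝒵 hPialg𝒵 h𝒵W s, hπ_pos s] with ω h hp
      simp only [hFdef, hRdef, h]
      field_simp
    have hFG_int : Integrable (fun ω => F ω * (indT T s ω - π s ω)) P :=
      ((hR_mem s).integrable one_le_two).congr hFG.symm
    have := integral_mul_eq_zero_of_condexp h𝒵Ω hFsm (hcent_int s) hFG_int (hcent_cond s)
    rw [← integral_congr_ae hFG]
    exact this
  -- E[(b_t(𝒵) - χ_t) * R s] = 0
  have hEaR : ∀ t s, ∫ ω, (bZ P T Y 𝒵 t ω - chiZ P T Y mW t) * R s ω ∂P = 0 := by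
    intro t s
    set F : Ω → ℝ := fun ω => (bZ P T Y 𝒵 t ω - chiZ P T Y mW t) *
      ((bZ P T Y 𝒵 s ω - bZ P T Y mP s ω) * (π s ω)⁻¹) with hFdef
    have hFsm : StronglyMeasurable[𝒵] F :=
      (((hb𝒵m t).sub measurable_const).mul ((hgm s).mul (hπm s).inv)).stronglyMeasurable
    have hFG : (fun ω => F ω * (indT T s ω - π s ω)) =ᵐ[P]
        fun ω => (bZ P T Y 𝒵 t ω - chiZ P T Y mW t) * R s ω := by
      filter_upwards [hπeq 𝒵 hPialg𝒵 h𝒵W s, hπ_pos s] with ω h hp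
      simp only [hFdef, hRdef, h]
      field_simp
    have hFG_int : Integrable (fun ω => F ω * (indT T s ω - π s ω)) P :=
      (integrable_mul_of_memLp_two (hA𝒵 t) (hR_mem s)).congr hFG.symm
    have := integral_mul_eq_zero_of_condexp h𝒵Ω hFsm (hcent_int s) hFG_int (hcent_cond s)
    rw [← integral_congr_ae hFG]
    exact this
  -- E[q_t * R s] = 0
  have hEqR : ∀ t s, ∫ ω,
      (indT T t ω / piZ P T 𝒵 t ω * (Y ω - bZ P T Y 𝒵 t ω)) * R s ω ∂P = 0 := by
    intro t s
    set F : Ω → ℝ := fun ω =>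
      (bZ P T Y 𝒵 s ω - bZ P T Y mP s ω) * (π t ω)⁻¹ *
        (if t = s then (π t ω)⁻¹ - 1 else -1) with hFdef
    have hFsm : StronglyMeasurable[𝒵] F := by
      refine Measurable.stronglyMeasurable ?_
      exact ((hgm s).mul (hπm t).inv).mul
        (Measurable.ite (MeasurableSet.const _) ((hπm t).inv.sub measurable_const)
          measurable_const)
    have hFG : (fun ω => F ω * (indT T t ω * (Y ω - bZ P T Y 𝒵 t ω))) =ᵐ[P]
        fun ω => (indT T t ω / piZ P T 𝒵 t ω * (Y ω - bZ P T Y 𝒵 t ω)) * R s ω := by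
      filter_upwards [hπeq 𝒵 hPialg𝒵 h𝒵W t, hπeq 𝒵 hPialg𝒵 h𝒵W s,
        hπ_pos t, hπ_pos s] with ω ht hs hpt hps
      simp only [hFdef, hRdef, ht, hs]
      by_cases hTt : T ω = t
      · rw [hind_eq_one t ω hTt]
        by_cases hts : t = s
        · subst hts
          rw [if_pos rfl, hind_eq_one t ω hTt]
          field_simp
        · rw [if_neg hts, hind_eq_zero s ω (by rw [hTt]; exact fun h => hts h)]
          field_simp
          ring
      · rw [hind_eq_zero t ω hTt]
        ring
    have hFG_int : Integrable
        (fun ω => F ω * (indT T t ω * (Y ω - bZ P T Y 𝒵 t ω))) P :=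
      (integrable_mul_of_memLp_two (hq𝒵_mem t) (hR_mem s)).congr hFG.symm
    have := integral_mul_eq_zero_of_condexp h𝒵Ω hFsm (hG2_int 𝒵 h𝒵W t (hb𝒵 t))
      hFG_int (hG2_cond 𝒵 hPialg𝒵 h𝒵W t (hb𝒵 t))
    rw [← integral_congr_ae hFG]
    exact this
  -- E[ψ_t(𝒵) * R s] = 0
  have hEψR : ∀ t s, ∫ ω, psiZ P T Y 𝒵 t ω * R s ω ∂P = 0 := by
    intro t s
    have hsplit : ∀ ω, psiZ P T Y 𝒵 t ω * R s ω =
        (bZ P T Y 𝒵 t ω - chiZ P T Y mW t) * R s ω +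
        (indT T t ω / piZ P T 𝒵 t ω * (Y ω - bZ P T Y 𝒵 t ω)) * R s ω := by
      intro ω
      simp only [psiZ]
      rw [hchi𝒵 t]
      ring
    have h1 : Integrable (fun ω => (bZ P T Y 𝒵 t ω - chiZ P T Y mW t) * R s ω) P :=
      integrable_mul_of_memLp_two (hA𝒵 t) (hR_mem s)
    have h2 : Integrable (fun ω =>
        (indT T t ω / piZ P T 𝒵 t ω * (Y ω - bZ P T Y 𝒵 t ω)) * R s ω) P :=
      integrable_mul_of_memLp_two (hq𝒵_mem t) (hR_mem s)
    calc ∫ ω, psiZ P T Y 𝒵 t ω * R s ω ∂P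
        = ∫ ω, ((bZ P T Y 𝒵 t ω - chiZ P T Y mW t) * R s ω +
          (indT T t ω / piZ P T 𝒵 t ω * (Y ω - bZ P T Y 𝒵 t ω)) * R s ω) ∂P := by
          exact integral_congr_ae (Filter.Eventually.of_forall hsplit)
      _ = 0 := by rw [integral_add h1 h2, hEaR t s, hEqR t s]; ring
  -- the summed functions
  set S𝒵 : Ω → ℝ := fun ω => ∑ t, c t * psiZ P T Y 𝒵 t ω with hS𝒵def
  set SP : Ω → ℝ := fun ω => ∑ t, c t * psiZ P T Y mP t ω with hSPdef
  set Rs : Ω → ℝ := fun ω => ∑ t, c t * R t ω with hRsdef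
  have hS𝒵_mem : MemLp S𝒵 2 P :=
    memLp_finset_sum _ fun t _ => (hψ𝒵 t).const_mul (c t)
  have hSP_mem : MemLp SP 2 P :=
    memLp_finset_sum _ fun t _ => (hψPialg t).const_mul (c t)
  have hRs_mem : MemLp Rs 2 P :=
    memLp_finset_sum _ fun t _ => ((hR_mem t).const_mul (c t))
  have hSP_eq : SP =ᵐ[P] fun ω => S𝒵 ω + Rs ω := by
    have hall : ∀ᵐ ω ∂P, ∀ t, psiZ P T Y mP t ω - psiZ P T Y 𝒵 t ω = R t ω :=
      ae_all_iff.mpr fun t => hRψ t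
    filter_upwards [hall] with ω h
    simp only [hSPdef, hS𝒵def, hRsdef, ← Finset.sum_add_distrib]
    refine Finset.sum_congr rfl fun t _ => ?_
    rw [← h t]
    ring
  have hERs : ∫ ω, Rs ω ∂P = 0 := by
    rw [hRsdef]
    rw [integral_finset_sum _ fun t _ =>
      (((hR_mem t).integrable one_le_two).const_mul (c t))]
    refine Finset.sum_eq_zero fun t _ => ?_
    rw [integral_const_mul, hER t, mul_zero]
  have hES𝒵Rs : ∫ ω, S𝒵 ω * Rs ω ∂P = 0 := by
    have hexp : ∀ ω, S𝒵 ω * Rs ω =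
        ∑ t, ∑ s, (c t * c s) * (psiZ P T Y 𝒵 t ω * R s ω) := by
      intro ω
      rw [hS𝒵def, hRsdef]
      rw [Finset.sum_mul_sum]
      refine Finset.sum_congr rfl fun t _ => Finset.sum_congr rfl fun s _ => by ring
    have hint : ∀ t s, Integrable (fun ω => (c t * c s) *
        (psiZ P T Y 𝒵 t ω * R s ω)) P := fun t s =>
      (integrable_mul_of_memLp_two (hψ𝒵 t) (hR_mem s)).const_mul _
    calc ∫ ω, S𝒵 ω * Rs ω ∂P
        = ∫ ω, ∑ t, ∑ s, (c t * c s) * (psiZ P T Y 𝒵 t ω * R s ω) ∂P :=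
          integral_congr_ae (Filter.Eventually.of_forall hexp)
      _ = ∑ t, ∑ s, ∫ ω, (c t * c s) * (psiZ P T Y 𝒵 t ω * R s ω) ∂P := by
          rw [integral_finset_sum _ fun t _ => integrable_finset_sum _ fun s _ => hint t s]
          exact Finset.sum_congr rfl fun t _ =>
            integral_finset_sum _ fun s _ => hint t s
      _ = 0 := by
          refine Finset.sum_eq_zero fun t _ => Finset.sum_eq_zero fun s _ => ?_
          rw [integral_const_mul, hEψR t s, mul_zero]
  -- variance identities
  have hVSP : variance SP P = variance (fun ω => S𝒵 ω + Rs ω) P := variance_congr_ae' hSP_eq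
  have hIsum : ∫ ω, (S𝒵 ω + Rs ω) ∂P = ∫ ω, S𝒵 ω ∂P := by
    rw [integral_add (hS𝒵_mem.integrable one_le_two) (hRs_mem.integrable one_le_two), hERs,
      add_zero]
  have hsq : ∫ ω, (S𝒵 ω + Rs ω) ^ 2 ∂P = ∫ ω, S𝒵 ω ^ 2 ∂P + ∫ ω, Rs ω ^ 2 ∂P := by
    have hexp : ∀ ω, (S𝒵 ω + Rs ω) ^ 2 =
        S𝒵 ω ^ 2 + (Rs ω ^ 2 + 2 * (S𝒵 ω * Rs ω)) := fun ω => by ring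
    have hi1 : Integrable (fun ω => 2 * (S𝒵 ω * Rs ω)) P :=
      (integrable_mul_of_memLp_two hS𝒵_mem hRs_mem).const_mul 2
    have hi2 : Integrable (fun ω => Rs ω ^ 2 + 2 * (S𝒵 ω * Rs ω)) P := by
      exact hRs_mem.integrable_sq.add hi1
    rw [integral_congr_ae (Filter.Eventually.of_forall hexp),
      integral_add hS𝒵_mem.integrable_sq hi2,
      integral_add hRs_mem.integrable_sq hi1,
      integral_const_mul, hES𝒵Rs]
    ring
  have hvar_def : ∀ (X : Ω → ℝ), MemLp X 2 P →
      variance X P = ∫ ω, X ω ^ 2 ∂P - (∫ ω, X ω ∂P) ^ 2 := by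
    intro X hX
    rw [variance_eq_sub hX]
    simp only [Pi.pow_apply]
  have hVdiff : VDelta P T Y c mP - VDelta P T Y c 𝒵 = variance Rs P := by
    have e1 : VDelta P T Y c mP = variance SP P := rfl
    have e2 : VDelta P T Y c 𝒵 = variance S𝒵 P := rfl
    have hadd_mem : MemLp (fun ω => S𝒵 ω + Rs ω) 2 P :=
      MemLp.ae_eq (g := fun ω => S𝒵 ω + Rs ω)
        (Filter.Eventually.of_forall fun ω => rfl) (hS𝒵_mem.add hRs_mem)
    rw [e1, e2, hVSP, hvar_def _ hadd_mem, hvar_def _ hS𝒵_mem, hvar_def _ hRs_mem,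
      hIsum, hsq, hERs]
    ring
  refine ⟨hchi𝒵, ?_, ?_⟩
  · exact hVdiff
  · rw [hVdiff]
    exact variance_nonneg _ _
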